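/- arXiv:2208.11741 — 2 statements merged into one kernel-verified Lean document; each statement's English description precedes it below -/
import Mathlib

section
/- Let q : [0,h] → ℝ be continuous, h > 0, μ₁ < 0, and let φ₁ : [0,h] → ℝ be C² with −φ₁'' − q φ₁ = μ₁ φ₁ on (0,h), φ₁(0) = φ₁(h) = 0, φ₁ > 0 on (0,h), and φ₁'(h) < 0. Suppose τ ∈ ℝ with τ² < −μ₁ and γ : [0,h] → ℝ is C² with −γ'' − q γ + τ² γ = 0 on (0,h), γ(0) = 0, γ(h) = 1. Then γ takes a strictly negative value at some point of (0,h); in particular γ changes sign on (0,h). -/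
/-- If φ₁ > 0 is a Dirichlet eigenfunction with eigenvalue μ₁ < 0, φ₁'(h) < 0,
and τ² < -μ₁, then the solution γ of -γ'' - qγ + τ²γ = 0 with γ(0)=0, γ(h)=1
takes a strictly negative value in (0,h); in particular γ changes sign. -/
theorem stmt_4 (h μ₁ τ : ℝ) (hh : 0 < h) (hμ : μ₁ < 0) (hτ : τ ^ 2 < -μ₁)
    (q : ℝ → ℝ) (hq : ContinuousOn q (Set.Icc 0 h))
    (φ₁ φ₁' φ₁'' γ γ' γ'' : ℝ → ℝ)
    (hφ1 : ∀ y ∈ Set.Icc 0 h, HasDerivAt φ₁ (φ₁' y) y)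
    (hφ2 : ∀ y ∈ Set.Icc 0 h, HasDerivAt φ₁' (φ₁'' y) y)
    (hφ3 : ContinuousOn φ₁'' (Set.Icc 0 h))
    (hφeq : ∀ y ∈ Set.Ioo 0 h, -(φ₁'' y) - q y * φ₁ y = μ₁ * φ₁ y)
    (hφ0 : φ₁ 0 = 0) (hφh : φ₁ h = 0)
    (hφpos : ∀ y ∈ Set.Ioo 0 h, 0 < φ₁ y)
    (hφ'h : φ₁' h < 0)
    (hγ1 : ∀ y ∈ Set.Icc 0 h, HasDerivAt γ (γ' y) y)
    (hγ2 : ∀ y ∈ Set.Icc 0 h, HasDerivAt γ' (γ'' y) y)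
    (hγ3 : ContinuousOn γ'' (Set.Icc 0 h))
    (hγeq : ∀ y ∈ Set.Ioo 0 h, -(γ'' y) - q y * γ y + τ ^ 2 * γ y = 0)
    (hγ0 : γ 0 = 0) (hγh : γ h = 1) :
    (∃ y ∈ Set.Ioo 0 h, γ y < 0) ∧ (∃ y ∈ Set.Ioo 0 h, 0 < γ y) := by
  have hh' : (0:ℝ) ≤ h := le_of_lt hh
  set c : ℝ := -μ₁ - τ ^ 2 with hc
  have hcpos : 0 < c := by simp only [hc]; linarith
  set W : ℝ → ℝ := fun y => γ y * φ₁' y - γ' y * φ₁ y with hW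
  -- derivative of W on the open interval
  have hWd : ∀ y ∈ Set.Ioo 0 h, HasDerivAt W (c * (γ y * φ₁ y)) y := by
    intro y hy
    have hy' : y ∈ Set.Icc 0 h := Set.mem_Icc_of_Ioo hy
    have h1 : HasDerivAt W (γ' y * φ₁' y + γ y * φ₁'' y -
        (γ'' y * φ₁ y + γ' y * φ₁' y)) y :=
      ((hγ1 y hy').mul (hφ2 y hy')).sub ((hγ2 y hy').mul (hφ1 y hy'))
    convert h1 using 1
    have e1 := hφeq y hy
    have e2 := hγeq y hy
    simp only [hc]
    linear_combination (γ y) * e1 - (φ₁ y) * e2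
  -- continuity of W on [0,h]
  have hWc : ContinuousOn W (Set.Icc 0 h) := by
    intro y hy
    exact (((hγ1 y hy).continuousAt.continuousWithinAt).mul
      ((hφ2 y hy).continuousAt.continuousWithinAt)).sub
      (((hγ2 y hy).continuousAt.continuousWithinAt).mul
      ((hφ1 y hy).continuousAt.continuousWithinAt))
  -- continuity of γ and φ₁ on [0,h]
  have hγc : ContinuousOn γ (Set.Icc 0 h) := fun y hy =>
    (hγ1 y hy).continuousAt.continuousWithinAt
  have hφc : ContinuousOn φ₁ (Set.Icc 0 h) := fun y hy =>
    (hφ1 y hy).continuousAt.continuousWithinAt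
  have hInt : IntervalIntegrable (fun y => c * (γ y * φ₁ y)) MeasureTheory.volume 0 h := by
    apply ContinuousOn.intervalIntegrable
    rw [Set.uIcc_of_le hh']
    exact (continuousOn_const.mul (hγc.mul hφc))
  have hFTC : ∫ y in (0:ℝ)..h, c * (γ y * φ₁ y) = W h - W 0 :=
    intervalIntegral.integral_eq_sub_of_hasDerivAt_of_le hh' hWc hWd hInt
  have hWh : W h - W 0 = φ₁' h := by
    simp only [hW, hγ0, hγh, hφ0, hφh]
    ring
  have hIntNeg : ∫ y in (0:ℝ)..h, c * (γ y * φ₁ y) < 0 := by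
    rw [hFTC, hWh]; exact hφ'h
  -- existence of a negative value
  have hneg : ∃ y ∈ Set.Ioo 0 h, γ y < 0 := by
    by_contra hcon
    push_neg at hcon
    have : 0 ≤ ∫ y in (0:ℝ)..h, c * (γ y * φ₁ y) := by
      apply intervalIntegral.integral_nonneg hh'
      intro u hu
      rcases eq_or_lt_of_le hu.1 with h0 | h0
      · rw [← h0, hφ0]; ring_nf; exact le_refl 0
      rcases eq_or_lt_of_le hu.2 with h1 | h1
      · rw [h1, hφh]; ring_nf; exact le_refl 0
      have hu' : u ∈ Set.Ioo 0 h := ⟨h0, h1⟩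
      exact mul_nonneg (le_of_lt hcpos)
        (mul_nonneg (hcon u hu') (le_of_lt (hφpos u hu')))
    linarith
  refine ⟨hneg, ?_⟩
  -- positive value near h since γ h = 1
  have hγch : ContinuousAt γ h := (hγ1 h (Set.right_mem_Icc.2 hh')).continuousAt
  have h1 : γ ⁻¹' Set.Ioi (0:ℝ) ∈ nhds h := by
    apply hγch.preimage_mem_nhds
    rw [hγh]
    exact Ioi_mem_nhds one_pos
  have h2 : Set.Ioo 0 h ∈ nhdsWithin h (Set.Iio h) :=
    Ioo_mem_nhdsLT_of_mem (Set.mem_Ioc.2 ⟨hh, le_refl h⟩)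
  have h3 : Set.Ioo 0 h ∩ γ ⁻¹' Set.Ioi (0:ℝ) ∈ nhdsWithin h (Set.Iio h) :=
    Filter.inter_mem h2 (nhdsWithin_le_nhds h1)
  obtain ⟨y, hy1, hy2⟩ := Filter.nonempty_of_mem h3
  exact ⟨y, hy1, hy2⟩
end

section
/- Let p : ℝ² → ℝ be a homogeneous harmonic polynomial of degree n > 2, not identically zero, vanishing on both lines {x = 0} and {y = 0}. Then p takes both strictly positive and strictly negative values on the open quadrant {(x,y) : x > 0, y > 0}. -/
open MvPolynomial Finset

lemma aux_coeff_pderiv {σ : Type*} [DecidableEq σ] (i : σ) (p : MvPolynomial σ ℝ)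
    (d : σ →₀ ℕ) :
    coeff d (pderiv i p) = (d i + 1 : ℕ) * coeff (d + Finsupp.single i 1) p := by
  induction p using MvPolynomial.induction_on' with
  | monomial s a =>
    rw [pderiv_monomial, coeff_monomial, coeff_monomial]
    by_cases h : s = d + Finsupp.single i 1
    · subst h
      have h1 : (d + Finsupp.single i 1 : σ →₀ ℕ) i = d i + 1 := by simp
      have h2 : (d + Finsupp.single i 1) - Finsupp.single i 1 = d := by
        ext j; by_cases hj : j = i <;> simp [hj, Finsupp.single_apply]
      rw [if_pos h2, h1]; simp only [if_true]; push_cast; ring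
    · rw [if_neg h]
      by_cases h2 : s - Finsupp.single i 1 = d
      · rw [if_pos h2]
        have hsi : s i = 0 := by
          by_contra hsi
          apply h
          ext j
          have hj2 := congrArg (fun f => f j) h2
          simp only [Finsupp.coe_tsub, Pi.sub_apply, Finsupp.single_apply,
            Finsupp.add_apply] at hj2 ⊢
          by_cases hj : i = j
          · subst hj; simp at hj2 ⊢; omega
          · simp [hj] at hj2 ⊢; omega
        simp [hsi]
      · rw [if_neg h2, mul_zero]
  | add f g hf hg => simp [map_add, coeff_add, hf, hg, mul_add]

lemma aux_I_pow_im (k : ℕ) :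
    (Complex.I ^ k).im = if Even k then 0 else (-1 : ℝ) ^ ((k - 1) / 2) := by
  have hc : ∀ j : ℕ, ((-1 : ℂ) ^ j) = (((-1 : ℝ) ^ j : ℝ) : ℂ) := by intro j; push_cast; ring
  rcases Nat.even_or_odd k with ⟨j, hj⟩ | ⟨j, hj⟩
  · subst hj
    have h1 : Complex.I ^ (j + j) = (-1 : ℂ) ^ j := by
      rw [← two_mul, pow_mul, Complex.I_sq]
    rw [h1, hc, if_pos ⟨j, rfl⟩, Complex.ofReal_im]
  · subst hj
    have h1 : Complex.I ^ (2 * j + 1) = (-1 : ℂ) ^ j * Complex.I := by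
      rw [pow_succ, pow_mul, Complex.I_sq]
    have hodd : ¬ Even (2 * j + 1) := by simp [parity_simps]
    have h2 : (2 * j + 1 - 1) / 2 = j := by omega
    rw [h1, hc, if_neg hodd, h2, Complex.mul_im, Complex.ofReal_re,
      Complex.ofReal_im, Complex.I_re, Complex.I_im]
    ring

lemma aux_im_pow (n : ℕ) (x y : ℝ) :
    (((y : ℂ) + (x : ℂ) * Complex.I) ^ n).im =
      ∑ k ∈ Finset.range (n + 1),
        (if Even k then 0 else (-1 : ℝ) ^ ((k - 1) / 2) * (n.choose k : ℝ)) * x ^ k * y ^ (n - k) := by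
  rw [add_comm ((y : ℂ)) _, add_pow, Complex.im_sum]
  apply Finset.sum_congr rfl
  intro k _
  have h : ((x : ℂ) * Complex.I) ^ k * (y : ℂ) ^ (n - k) * (n.choose k : ℂ)
      = ((x ^ k * y ^ (n - k) * (n.choose k : ℝ)) : ℂ) * Complex.I ^ k := by
    push_cast; ring
  rw [h]
  by_cases he : Even k <;>
    simp [Complex.mul_im, aux_I_pow_im, he, ← Complex.ofReal_pow, ← Complex.ofReal_natCast,
      ← Complex.ofReal_mul] <;> ring

lemma aux_degree_fin2 (d : Fin 2 →₀ ℕ) : d.degree = d 0 + d 1 := by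
  rw [Finsupp.degree_apply]
  rw [Finset.sum_subset (Finset.subset_univ d.support)
    (by intro i _ hi; simpa using (Finsupp.notMem_support_iff.mp hi))]
  exact Fin.sum_univ_two d

lemma aux_rep (n : ℕ) (p : MvPolynomial (Fin 2) ℝ) (hhom : p.IsHomogeneous n) :
    p = ∑ k ∈ Finset.range (n + 1),
      monomial (Finsupp.single 0 k + Finsupp.single (1 : Fin 2) (n - k))
        (coeff (Finsupp.single 0 k + Finsupp.single 1 (n - k)) p) := by
  apply MvPolynomial.ext
  intro d
  rw [MvPolynomial.coeff_sum]
  simp only [coeff_monomial]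
  have hdval : ∀ k : ℕ,
      ((Finsupp.single (0 : Fin 2) k + Finsupp.single (1 : Fin 2) (n - k)) : Fin 2 →₀ ℕ) 0 = k ∧
      ((Finsupp.single (0 : Fin 2) k + Finsupp.single (1 : Fin 2) (n - k)) : Fin 2 →₀ ℕ) 1 = n - k := by
    intro k
    constructor <;> simp [Finsupp.single_apply]
  by_cases hd : d 0 + d 1 = n
  · have hdeq : (Finsupp.single (0 : Fin 2) (d 0) + Finsupp.single (1 : Fin 2) (n - d 0)) = d := by
      ext i
      fin_cases i <;> simp [Finsupp.single_apply] <;> omega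
    have hcond : ∀ k, ((Finsupp.single (0 : Fin 2) k + Finsupp.single (1 : Fin 2) (n - k)) = d) ↔ k = d 0 := by
      intro k
      constructor
      · intro h
        have := (hdval k).1
        rw [h] at this
        omega
      · rintro rfl; exact hdeq
    rw [Finset.sum_congr rfl (fun k _ => by rw [if_congr (hcond k) rfl rfl])]
    rw [Finset.sum_ite_eq' (Finset.range (n+1)) (d 0) (fun _ => coeff _ p)]
    rw [if_pos (Finset.mem_range.mpr (by omega))]
    rw [hdeq]
  · have h0 : coeff d p = 0 := hhom.coeff_eq_zero (by rw [aux_degree_fin2]; exact hd)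
    rw [h0]
    symm
    apply Finset.sum_eq_zero
    intro k hk
    rw [if_neg]
    intro h
    have h1 := (hdval k).1
    have h2 := (hdval k).2
    rw [h] at h1 h2
    have hk' := Finset.mem_range.mp hk
    omega

lemma aux_eval_monomial (k m : ℕ) (c x y : ℝ) :
    eval ![x, y] (monomial (Finsupp.single 0 k + Finsupp.single (1 : Fin 2) m) c)
      = c * x ^ k * y ^ m := by
  rw [eval_monomial]
  rw [Finsupp.prod_add_index (by intros; simp) (by intros; simp [pow_add])]
  rw [Finsupp.prod_single_index (by simp), Finsupp.prod_single_index (by simp)]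
  simp [mul_assoc]

lemma aux_choose_rec (n k : ℕ) :
    (k + 1) * ((k + 2) * n.choose (k + 2)) = (n - k) * ((n - k - 1) * n.choose k) := by
  have h1 := Nat.choose_succ_right_eq n k
  have h2 := Nat.choose_succ_right_eq n (k + 1)
  calc (k + 1) * ((k + 2) * n.choose (k + 2))
      = (k + 1) * (n.choose (k + 2) * (k + 2)) := by ring
    _ = (k + 1) * (n.choose (k + 1) * (n - (k + 1))) := by rw [h2]
    _ = (n.choose (k + 1) * (k + 1)) * (n - (k + 1)) := by ring
    _ = (n.choose k * (n - k)) * (n - (k + 1)) := by rw [h1]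
    _ = (n - k) * ((n - k - 1) * n.choose k) := by
        have : n - (k + 1) = n - k - 1 := by omega
        rw [this]; ring

/-- A nonzero homogeneous harmonic polynomial of degree n > 2 in two variables
vanishing on both coordinate lines takes both strictly positive and strictly
negative values on the open quadrant x > 0, y > 0. -/
theorem stmt_11 (n : ℕ) (hn : 2 < n) (p : MvPolynomial (Fin 2) ℝ)
    (hhom : p.IsHomogeneous n) (hp : p ≠ 0)
    (hharm : pderiv 0 (pderiv 0 p) + pderiv 1 (pderiv 1 p) = 0)
    (hvanx : ∀ t : ℝ, eval ![0, t] p = 0)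
    (hvany : ∀ t : ℝ, eval ![t, 0] p = 0) :
    (∃ x y : ℝ, 0 < x ∧ 0 < y ∧ 0 < eval ![x, y] p) ∧
      (∃ x y : ℝ, 0 < x ∧ 0 < y ∧ eval ![x, y] p < 0) := by
  set a : ℕ → ℝ := fun k =>
    coeff (Finsupp.single 0 k + Finsupp.single 1 (n - k)) p with ha_def
  have hnne : (n : ℝ) ≠ 0 := by positivity
  have hrep := aux_rep n p hhom
  -- evaluation formula
  have heval : ∀ x y : ℝ, eval ![x, y] p
      = ∑ k ∈ Finset.range (n + 1), a k * x ^ k * y ^ (n - k) := by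
    intro x y
    conv_lhs => rw [hrep]
    rw [map_sum]
    exact Finset.sum_congr rfl fun k _ => aux_eval_monomial k (n - k) (a k) x y
  -- boundary coefficients
  have ha0 : a 0 = 0 := by
    have h := hvanx 1
    rw [heval 0 1] at h
    rw [Finset.sum_eq_single 0 (fun k _ hk => by
      simp [zero_pow hk]) (by simp)] at h
    simpa using h
  have han : a n = 0 := by
    have h := hvany 1
    rw [heval 1 0] at h
    rw [Finset.sum_eq_single n (fun k hk hkn => by
      have : n - k ≠ 0 := by
        have := Finset.mem_range.mp hk; omega
      simp [zero_pow this]) (by simp)] at h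
    simpa using h
  -- the harmonic recurrence
  have hrec : ∀ k, k ≤ n - 2 →
      ((k : ℝ) + 1) * ((k : ℝ) + 2) * a (k + 2)
        + ((n - k - 1 : ℕ) : ℝ) * ((n - k : ℕ) : ℝ) * a k = 0 := by
    intro k hk
    set d : Fin 2 →₀ ℕ := Finsupp.single 0 k + Finsupp.single 1 (n - 2 - k) with hd_def
    have hd0 : d 0 = k := by simp [hd_def, Finsupp.single_apply]
    have hd1 : d 1 = n - 2 - k := by simp [hd_def, Finsupp.single_apply]
    have hcoeff := congrArg (coeff d) hharm
    rw [coeff_add, MvPolynomial.coeff_zero] at hcoeff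
    rw [aux_coeff_pderiv, aux_coeff_pderiv, aux_coeff_pderiv, aux_coeff_pderiv] at hcoeff
    have he0 : d + Finsupp.single 0 1 + Finsupp.single 0 1
        = Finsupp.single 0 (k + 2) + Finsupp.single (1 : Fin 2) (n - (k + 2)) := by
      ext i
      fin_cases i <;> simp [hd_def, Finsupp.single_apply] <;> omega
    have he1 : d + Finsupp.single 1 1 + Finsupp.single 1 1
        = Finsupp.single 0 k + Finsupp.single (1 : Fin 2) (n - k) := by
      ext i
      fin_cases i <;> simp [hd_def, Finsupp.single_apply] <;> omega
    have hv0 : (d + Finsupp.single 0 1 : Fin 2 →₀ ℕ) 0 = k + 1 := by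
      simp [hd0]
    have hv1 : (d + Finsupp.single 1 1 : Fin 2 →₀ ℕ) 1 = (n - 2 - k) + 1 := by
      simp [hd1]
    rw [he0, he1, hv0, hv1, hd0, hd1] at hcoeff
    have hak2 : coeff (Finsupp.single 0 (k + 2) + Finsupp.single (1 : Fin 2) (n - (k + 2))) p
        = a (k + 2) := rfl
    have hak : coeff (Finsupp.single 0 k + Finsupp.single (1 : Fin 2) (n - k)) p = a k := rfl
    rw [hak2, hak] at hcoeff
    have hc1 : ((n - 2 - k) + 1 : ℕ) = n - k - 1 := by omega
    have hc2 : ((n - 2 - k) + 1 + 1 : ℕ) = n - k := by omega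
    rw [hc1] at hcoeff
    have : ((k + 1 + 1 : ℕ) : ℝ) = (k : ℝ) + 2 := by push_cast; ring
    calc ((k : ℝ) + 1) * ((k : ℝ) + 2) * a (k + 2)
          + ((n - k - 1 : ℕ) : ℝ) * ((n - k : ℕ) : ℝ) * a k
        = ((k + 1 : ℕ) : ℝ) * (((k + 1 : ℕ) : ℝ) + 1) * a (k + 2)
          + (((n - k - 1 : ℕ) : ℝ) + 1) * ((n - k - 1 : ℕ) : ℝ) * a k := by
          have hnk : ((n - k : ℕ) : ℝ) = ((n - k - 1 : ℕ) : ℝ) + 1 := by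
            have : n - k = (n - k - 1) + 1 := by omega
            rw [this]; push_cast; ring
          rw [hnk]; push_cast; ring
      _ = 0 := by
          rw [← hcoeff]; push_cast; ring
  -- closed form for the coefficients
  set e : ℕ → ℝ := fun k =>
    if Even k then 0 else (-1 : ℝ) ^ ((k - 1) / 2) * (n.choose k : ℝ) with he_def
  have hform : ∀ j, j ≤ n → a j = (a 1 / n) * e j := by
    intro j
    induction j using Nat.strong_induction_on with
    | _ j ih =>
      match j with
      | 0 => intro _; simp [he_def, ha0]
      | 1 =>
        intro _
        simp only [he_def]
        rw [if_neg (by simp)]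
        simp [Nat.choose_one_right]
        field_simp
      | (k + 2) =>
        intro hj
        have hk2 : k ≤ n - 2 := by omega
        have hr := hrec k hk2
        have hik := ih k (by omega) (by omega)
        have hpos : ((k : ℝ) + 1) * ((k : ℝ) + 2) ≠ 0 := by positivity
        -- the e-recurrence
        have herec : ((k : ℝ) + 1) * ((k : ℝ) + 2) * e (k + 2)
            + ((n - k - 1 : ℕ) : ℝ) * ((n - k : ℕ) : ℝ) * e k = 0 := by
          by_cases hev : Even k
          · have hev2 : Even (k + 2) := by
              obtain ⟨m, hm⟩ := hev; exact ⟨m + 1, by omega⟩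
            simp [he_def, hev, hev2]
          · have hev2 : ¬ Even (k + 2) := fun h => hev (by
              obtain ⟨m, hm⟩ := h; exact ⟨m - 1, by omega⟩)
            simp only [he_def, if_neg hev, if_neg hev2]
            have hq1 : (k + 2 - 1) / 2 = (k - 1) / 2 + 1 := by
              have := Nat.not_even_iff_odd.mp hev
              obtain ⟨j2, hj2⟩ := this
              omega
            rw [hq1, pow_succ]
            have hnat := aux_choose_rec n k
            have hcast : ((k : ℝ) + 1) * ((k : ℝ) + 2) * (n.choose (k + 2) : ℝ)
                = ((n - k : ℕ) : ℝ) * (((n - k - 1 : ℕ) : ℝ) * (n.choose k : ℝ)) := by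
              have := congrArg (fun m : ℕ => (m : ℝ)) hnat
              push_cast at this
              linarith [this]
            linear_combination (-((-1 : ℝ) ^ ((k - 1) / 2))) * hcast
        -- solve for a (k+2)
        apply mul_left_cancel₀ hpos
        linear_combination hr - (a 1 / (n : ℝ)) * herec
          - (((n - k - 1 : ℕ) : ℝ) * ((n - k : ℕ) : ℝ)) * hik
  -- a 1 ≠ 0
  have ha1 : a 1 ≠ 0 := by
    intro h1
    apply hp
    rw [hrep]
    apply Finset.sum_eq_zero
    intro k hk
    have hk' : k ≤ n := by have := Finset.mem_range.mp hk; omega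
    have : a k = 0 := by rw [hform k hk', h1]; simp
    rw [show coeff (Finsupp.single 0 k + Finsupp.single 1 (n - k)) p = a k from rfl, this,
      map_zero]
  -- n is even
  have hneven : Even n := by
    by_contra hodd
    have hen : e n = (-1 : ℝ) ^ ((n - 1) / 2) * (n.choose n : ℝ) := by
      simp [he_def, hodd]
    have hs : ((-1 : ℝ) ^ ((n - 1) / 2)) ≠ 0 := pow_ne_zero _ (by norm_num)
    have h := hform n le_rfl
    rw [han, hen, Nat.choose_self] at h
    have hdiv : a 1 / n = 0 := by
      rcases mul_eq_zero.mp h.symm with h' | h'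
      · exact h'
      · exact absurd h' (mul_ne_zero hs (by norm_num))
    exact ha1 ((div_eq_zero_iff.mp hdiv).resolve_right hnne)
  have hn4 : 4 ≤ n := by
    rcases hneven with ⟨m, hm⟩
    omega
  -- the key formula
  have hkey : ∀ x y : ℝ, eval ![x, y] p
      = (a 1 / n) * (((y : ℂ) + (x : ℂ) * Complex.I) ^ n).im := by
    intro x y
    rw [heval, aux_im_pow, Finset.mul_sum]
    apply Finset.sum_congr rfl
    intro k hk
    have hk' : k ≤ n := by have := Finset.mem_range.mp hk; omega
    rw [hform k hk']
    simp only [he_def]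
    ring
  -- trigonometric formula
  have htrig : ∀ θ : ℝ, eval ![Real.sin θ, Real.cos θ] p
      = (a 1 / n) * Real.sin (n * θ) := by
    intro θ
    rw [hkey]
    congr 1
    rw [Complex.ofReal_cos, Complex.ofReal_sin, Complex.cos_add_sin_mul_I_pow]
    have harg : ((n : ℂ) * (θ : ℂ)) = ((n * θ : ℝ) : ℂ) := by push_cast; ring
    rw [harg, ← Complex.ofReal_cos, ← Complex.ofReal_sin, Complex.add_im,
      Complex.ofReal_im, Complex.mul_im, Complex.ofReal_re, Complex.ofReal_im,
      Complex.I_im, Complex.I_re]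
    ring
  have hpi := Real.pi_pos
  have hnR : (0 : ℝ) < n := by positivity
  -- the two sample angles
  set θ₁ : ℝ := Real.pi / (2 * n) with hθ1
  set θ₂ : ℝ := 3 * Real.pi / (2 * n) with hθ2
  have hθ1pos : 0 < θ₁ := by positivity
  have hθ2pos : 0 < θ₂ := by positivity
  have hθ2lt : θ₂ < Real.pi / 2 := by
    rw [hθ2, div_lt_div_iff₀ (by positivity) (by norm_num)]
    have : (4 : ℝ) ≤ n := by exact_mod_cast hn4
    nlinarith
  have hθ1lt : θ₁ < Real.pi / 2 := by
    have h12 : θ₁ < θ₂ := by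
      rw [hθ1, hθ2, div_lt_div_iff₀ (by positivity) (by positivity)]
      nlinarith
    linarith
  have hsin1 : Real.sin (n * θ₁) = 1 := by
    have : (n : ℝ) * θ₁ = Real.pi / 2 := by
      rw [hθ1]; field_simp
    rw [this, Real.sin_pi_div_two]
  have hsin2 : Real.sin (n * θ₂) = -1 := by
    have harg : (n : ℝ) * θ₂ = Real.pi + Real.pi / 2 := by
      rw [hθ2]; field_simp; ring
    rw [harg, Real.sin_add, Real.sin_pi, Real.cos_pi, Real.sin_pi_div_two]
    ring
  have hs1 : 0 < Real.sin θ₁ := Real.sin_pos_of_pos_of_lt_pi hθ1pos (by linarith)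
  have hc1 : 0 < Real.cos θ₁ := Real.cos_pos_of_mem_Ioo ⟨by linarith, hθ1lt⟩
  have hs2 : 0 < Real.sin θ₂ := Real.sin_pos_of_pos_of_lt_pi hθ2pos (by linarith)
  have hc2 : 0 < Real.cos θ₂ := Real.cos_pos_of_mem_Ioo ⟨by linarith, hθ2lt⟩
  have hv1 : eval ![Real.sin θ₁, Real.cos θ₁] p = a 1 / n := by
    rw [htrig, hsin1, mul_one]
  have hv2 : eval ![Real.sin θ₂, Real.cos θ₂] p = -(a 1 / n) := by
    rw [htrig, hsin2]; ring
  have hcne : a 1 / n ≠ 0 := fun h =>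
    ha1 ((div_eq_zero_iff.mp h).resolve_right hnne)
  rcases lt_or_gt_of_ne hcne with hlt | hgt
  · constructor
    · exact ⟨Real.sin θ₂, Real.cos θ₂, hs2, hc2, by rw [hv2]; linarith⟩
    · exact ⟨Real.sin θ₁, Real.cos θ₁, hs1, hc1, by rw [hv1]; linarith⟩
  · constructor
    · exact ⟨Real.sin θ₁, Real.cos θ₁, hs1, hc1, by rw [hv1]; linarith⟩
    · exact ⟨Real.sin θ₂, Real.cos θ₂, hs2, hc2, by rw [hv2]; linarith⟩
end
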